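/- Let ω = e^{2πi/3} ∈ ℂ, τ = ω + 2, and for k ≡ 11 (mod 12) let M_k = (τ^k − 1)/(τ − 1) ∈ ℂ. Then Re(M_k) = −1/2 and Im(M_k) = (√3 − 2·3^{k/2})/2; consequently the argument of M_k lies in the interval [−2π/3, −π/3) (i.e., M_k lies in the fifth sextant of the plane, so its complex conjugate lies in the second sextant). -/

import Mathlib

open Complex

/-- The primitive cube root of unity `ω = e^{2πi/3}`. -/
noncomputable def ω : ℂ := Complex.exp (2 * Real.pi * Complex.I / 3)

/-- `τ = ω + 2`. -/
noncomputable def τ : ℂ := ω + 2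

/-- The `τ`-Mersenne number `M_k = (τ^k − 1)/(τ − 1)` as a complex number. -/
noncomputable def M (k : ℕ) : ℂ := (τ ^ k - 1) / (τ - 1)

lemma tau_eq : τ = 3/2 + ((Real.sqrt 3 : ℝ) : ℂ)/2 * Complex.I := by
  have h1 : (2 * (Real.pi:ℂ) * Complex.I / 3) = ((2 * Real.pi / 3 : ℝ) : ℂ) * Complex.I := by
    push_cast; ring
  have : ω = Complex.cos (2*Real.pi/3 : ℝ) + Complex.sin (2*Real.pi/3 : ℝ) * Complex.I := by
    rw [ω, h1, Complex.exp_mul_I]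
  rw [τ, this, ← Complex.ofReal_cos, ← Complex.ofReal_sin]
  have hc : Real.cos (2*Real.pi/3) = -(1/2) := by
    have : (2*Real.pi/3 : ℝ) = Real.pi - Real.pi/3 := by ring
    rw [this, Real.cos_pi_sub, Real.cos_pi_div_three]
  have hs : Real.sin (2*Real.pi/3) = Real.sqrt 3 / 2 := by
    have : (2*Real.pi/3 : ℝ) = Real.pi - Real.pi/3 := by ring
    rw [this, Real.sin_pi_sub, Real.sin_pi_div_three]
  rw [hc, hs]; push_cast; ring

lemma hsC : ((Real.sqrt 3 : ℝ) : ℂ)^2 = 3 := by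
  rw [← Complex.ofReal_pow, Real.sq_sqrt (by norm_num : (0:ℝ) ≤ 3)]; norm_num

lemma h2 : τ^2 = 3*τ - 3 := by
  rw [tau_eq]
  linear_combination (Complex.I^2/4) * hsC + (3/4 : ℂ) * Complex.I_sq

lemma h3 : τ^3 = 6*τ - 9 := by linear_combination (τ+3) * h2
lemma h5 : τ^5 = 9*τ - 27 := by linear_combination (τ^2+6) * h3 + (-9 : ℂ) * h2
lemma h6 : (τ:ℂ)^6 = -27 := by linear_combination (τ^3 + 6*τ - 9) * h3 + 36 * h2
lemma h11 : τ^11 = 729 - 243*τ := by linear_combination (τ^5) * h6 + (-27 : ℂ) * h5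
lemma h12 : τ^12 = 729 := by linear_combination (τ^6 - 27) * h6

set_option maxHeartbeats 1000000 in
/-- For `k ≡ 11 (mod 12)`:
`Re M_k = −1/2`, `Im M_k = (√3 − 2·3^{k/2})/2`, so `Arg M_k ∈ [−2π/3, −π/3)`
(`M_k` lies in the fifth sextant) and `Arg M̄_k ∈ [π/3, 2π/3)` (its conjugate lies in
the second sextant). -/
theorem mersenne_fifth_sextant (k : ℕ) (hmod : k % 12 = 11) :
    (M k).re = -(1 / 2 : ℝ) ∧
    (M k).im = (Real.sqrt 3 - 2 * (3 : ℝ) ^ ((k : ℝ) / 2)) / 2 ∧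
    -(2 * Real.pi / 3) ≤ (M k).arg ∧ (M k).arg < -(Real.pi / 3) ∧
    Real.pi / 3 ≤ ((starRingEnd ℂ) (M k)).arg ∧
    ((starRingEnd ℂ) (M k)).arg < 2 * Real.pi / 3 := by
  have hpi := Real.pi_pos
  set m := k / 12 with hm
  have hk : k = 12 * m + 11 := by omega
  have hs2 : Real.sqrt 3 ^ 2 = 3 := Real.sq_sqrt (by norm_num)
  have hs_pos : 0 < Real.sqrt 3 := Real.sqrt_pos.mpr (by norm_num)
  have hτk : τ ^ k = (729 : ℂ)^m * (729 - 243*τ) := by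
    rw [hk, pow_add, pow_mul, h12, h11]
  have him1 : (τ - 1).im = Real.sqrt 3 / 2 := by rw [tau_eq]; simp
  have hne : τ - 1 ≠ 0 := by
    intro h; rw [h] at him1; simp at him1; linarith
  set y : ℝ := Real.sqrt 3/2 - 243*(729:ℝ)^m*Real.sqrt 3 with hy
  have hM : M k = ((-(1/2) : ℝ) : ℂ) + (y : ℂ) * Complex.I := by
    rw [hy, M, div_eq_iff hne, hτk, tau_eq]
    push_cast
    linear_combination (-(Complex.I^2)/4 + (243*(729:ℂ)^m/2)*Complex.I^2) * hsC +
      (-3/4 + 729*(729:ℂ)^m/2 : ℂ) * Complex.I_sq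
  have hre : (M k).re = -(1/2 : ℝ) := by rw [hM]; simp
  have himv : (M k).im = y := by rw [hM]; simp
  have hA : (1:ℝ) ≤ (729:ℝ)^m := one_le_pow₀ (by norm_num : (1:ℝ) ≤ 729)
  -- rpow identity
  have hpow : (3:ℝ) ^ ((k:ℝ)/2) = 243*(729:ℝ)^m * Real.sqrt 3 := by
    have e1 : (3:ℝ) ^ ((k:ℝ)/2) = ((3:ℝ) ^ ((1:ℝ)/2)) ^ (k:ℕ) := by
      rw [← Real.rpow_natCast ((3:ℝ) ^ ((1:ℝ)/2)) k, ← Real.rpow_mul (by norm_num)]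
      ring_nf
    rw [e1, ← Real.sqrt_eq_rpow, hk, pow_add, pow_mul]
    have e2 : (Real.sqrt 3)^12 = 729 := by
      have : (Real.sqrt 3)^12 = ((Real.sqrt 3)^2)^6 := by ring
      rw [this, hs2]; norm_num
    have e3 : (Real.sqrt 3)^11 = 243 * Real.sqrt 3 := by
      have : (Real.sqrt 3)^11 = ((Real.sqrt 3)^2)^5 * Real.sqrt 3 := by ring
      rw [this, hs2]; norm_num
    rw [e2, e3]; ring
  have him : (M k).im = (Real.sqrt 3 - 2 * (3 : ℝ) ^ ((k : ℝ) / 2)) / 2 := by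
    rw [himv, hy, hpow]; ring
  -- sign facts
  have hy_neg : y < 0 := by rw [hy]; nlinarith
  have hre_neg : (M k).re < 0 := by rw [hre]; norm_num
  have him_neg : (M k).im < 0 := by rw [himv]; exact hy_neg
  have hMne : M k ≠ 0 := by
    intro h
    have := hre
    rw [h] at this; norm_num at this
  have habs_pos : 0 < ‖M k‖ := norm_pos_iff.mpr hMne
  have habs2 : (‖M k‖)^2 = 1/4 + y^2 := by
    rw [Complex.sq_norm, Complex.normSq_apply, hre, himv]; ring
  -- arg formula
  have harg : (M k).arg = Real.arcsin ((-(M k)).im / ‖M k‖) - Real.pi :=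
    Complex.arg_of_re_neg_of_im_neg hre_neg him_neg
  set r : ℝ := (-(M k)).im / ‖M k‖ with hr
  have hrval : r = -y / ‖M k‖ := by rw [hr, Complex.neg_im, himv]
  have hr1 : r ≤ 1 := by
    rw [hr]; rw [div_le_one habs_pos, Complex.neg_im]
    calc -(M k).im ≤ |(M k).im| := neg_le_abs _
    _ ≤ ‖M k‖ := Complex.abs_im_le_norm _
  -- key strict inequality r > √3/2
  have hkey : Real.sqrt 3 / 2 < r := by
    rw [hrval, lt_div_iff₀ habs_pos]
    have h1 : 0 < -y := by linarith
    have h2 : (Real.sqrt 3 / 2 * ‖M k‖)^2 < (-y)^2 := by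
      have : (Real.sqrt 3 / 2 * ‖M k‖)^2
          = 3/4 * (‖M k‖)^2 := by rw [mul_pow]; rw [div_pow, hs2]; ring
      rw [this, habs2, hy]; nlinarith [hs2, hA, hs_pos, sq_nonneg ((729:ℝ)^m - 1)]
    have h3 : 0 ≤ Real.sqrt 3 / 2 * ‖M k‖ := by positivity
    nlinarith
  have harcsin_lb : Real.pi / 3 < Real.arcsin r := by
    have e : Real.arcsin (Real.sqrt 3 / 2) = Real.pi / 3 := by
      rw [← Real.sin_pi_div_three]
      exact Real.arcsin_sin (by linarith) (by linarith)
    rw [← e]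
    have hs_le2 : Real.sqrt 3 ≤ 2 := by nlinarith [hs2, hs_pos]
    have m1 : Real.sqrt 3 / 2 ∈ Set.Icc (-1:ℝ) 1 := ⟨by linarith, by linarith⟩
    have m2 : r ∈ Set.Icc (-1:ℝ) 1 := ⟨by linarith, hr1⟩
    exact Real.strictMonoOn_arcsin m1 m2 hkey
  have harcsin_ub : Real.arcsin r ≤ Real.pi / 2 := Real.arcsin_le_pi_div_two r
  have harg_lt : (M k).arg < -(Real.pi / 3) := by rw [harg]; linarith
  have harg_gt : -(2 * Real.pi / 3) < (M k).arg := by rw [harg]; linarith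
  have hconj : ((starRingEnd ℂ) (M k)).arg = -(M k).arg := by
    rw [Complex.arg_conj, if_neg]
    intro h; rw [h] at harg_lt; linarith
  refine ⟨hre, him, le_of_lt harg_gt, harg_lt, ?_, ?_⟩
  · rw [hconj]; linarith
  · rw [hconj]; linarith
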